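/- Let a, b, Ū > 0 and let v : ℳ → ℝ be semiconcave. Define Ũ(s,i) = min(max(∂⁺ₛv(s,i)/(bs), 0), Ū), where ∂⁺ₛv denotes the right directional derivative of v in the s-direction. Then, in the sense of distributions, s·∂Ũ/∂s ≤ (1/b)·∂/∂s(∂⁺ₛv), and since v is semiconcave its second distributional derivative in s is bounded above; hence (s·∂Ũ/∂s)⁺ ∈ L^∞(ℳ). -/

import Mathlib

open Set Filter

/-- For the quadratic-cost feedback `Ũ(s,i) = clamp(∂⁺ₛv(s,i)/(bs), [0,Ū])`
built from a semiconcave `v`, the (one-sided, distributional) quantity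
`s ∂Ũ/∂s` has essentially bounded positive part: there is `M ≥ 0` with
`s₁ (Ũ(s₂,i) - Ũ(s₁,i)) ≤ M (s₂ - s₁)` for `s₁ ≤ s₂`. -/
theorem feedback_weighted_derivative_bounded
    (a b Ubar K : ℝ) (ha : 0 < a) (hb : 0 < b) (hU : 0 < Ubar) (hK : 0 ≤ K)
    (Mset : Set (ℝ × ℝ))
    (hMset : Mset = {x : ℝ × ℝ | x.1 ∈ Ioo (0:ℝ) 1 ∧ x.2 ∈ Ioo (0:ℝ) 1 ∧
      x.1 + x.2 < 1})
    (v : ℝ × ℝ → ℝ)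
    -- semiconcavity in `s` with constant `K`: `s ↦ v(s,i) - K s²` is concave on slices
    (hsc : ∀ i : ℝ, ConcaveOn ℝ {s : ℝ | (s, i) ∈ Mset}
      (fun s => v (s, i) - K * s^2))
    -- `w` is the right partial derivative `∂⁺ₛv`
    (w : ℝ × ℝ → ℝ)
    (hw : ∀ x ∈ Mset, Tendsto (fun h : ℝ => (v (x.1 + h, x.2) - v x) / h)
      (nhdsWithin 0 (Ioi 0)) (nhds (w x))) :
    let Utilde : ℝ × ℝ → ℝ := fun x => min (max (w x / (b * x.1)) 0) Ubar
    ∃ M₀ : ℝ, 0 ≤ M₀ ∧ ∀ (i s₁ s₂ : ℝ), (s₁, i) ∈ Mset → (s₂, i) ∈ Mset →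
      s₁ ≤ s₂ →
      s₁ * (Utilde (s₂, i) - Utilde (s₁, i)) ≤ M₀ * (s₂ - s₁) := by
  intro Utilde
  subst hMset
  have hmono : ∀ i s₁ s₂ : ℝ, (s₁, i) ∈ {x : ℝ × ℝ | x.1 ∈ Ioo (0:ℝ) 1 ∧ x.2 ∈ Ioo (0:ℝ) 1 ∧ x.1 + x.2 < 1} →
      (s₂, i) ∈ {x : ℝ × ℝ | x.1 ∈ Ioo (0:ℝ) 1 ∧ x.2 ∈ Ioo (0:ℝ) 1 ∧ x.1 + x.2 < 1} →
      s₁ ≤ s₂ → w (s₂, i) ≤ w (s₁, i) + 2*K*(s₂ - s₁) := by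
    intro i s₁ s₂ h₁ h₂ h12
    simp only [Set.mem_setOf_eq, Set.mem_Ioo] at h₁ h₂
    obtain ⟨⟨hs₁0, hs₁1⟩, ⟨hi0, hi1⟩, hsum₁⟩ := h₁
    obtain ⟨⟨hs₂0, hs₂1⟩, -, hsum₂⟩ := h₂
    have hlim : ∀ s : ℝ, 0 < s → s + i < 1 →
        Tendsto (fun h : ℝ => ((v (s + h, i) - K * (s+h)^2) - (v (s, i) - K * s^2)) / h)
          (nhdsWithin 0 (Ioi 0)) (nhds (w (s, i) - 2*K*s)) := by
      intro s hs0 hsum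
      have hmem : ((s, i) : ℝ × ℝ) ∈ {x : ℝ × ℝ | x.1 ∈ Ioo (0:ℝ) 1 ∧ x.2 ∈ Ioo (0:ℝ) 1 ∧ x.1 + x.2 < 1} := by
        simp only [Set.mem_setOf_eq, Set.mem_Ioo]
        exact ⟨⟨hs0, by linarith⟩, ⟨hi0, hi1⟩, hsum⟩
      have h1 := hw (s, i) hmem
      have h2 : Tendsto (fun h : ℝ => K * (2*s + h)) (nhdsWithin 0 (Ioi 0)) (nhds (2*K*s)) := by
        have : Tendsto (fun h : ℝ => K * (2*s + h)) (nhds 0) (nhds (K * (2*s + 0))) :=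
          Continuous.tendsto (by continuity) 0
        simpa [mul_comm, mul_assoc, mul_left_comm] using this.mono_left nhdsWithin_le_nhds
      refine (h1.sub h2).congr' ?_
      filter_upwards [self_mem_nhdsWithin] with h hh
      have hh0 : (h:ℝ) ≠ 0 := ne_of_gt hh
      field_simp
      ring
    have L₁ := hlim s₁ hs₁0 hsum₁
    have L₂ := hlim s₂ hs₂0 hsum₂
    have hev : ∀ᶠ h in nhdsWithin (0:ℝ) (Ioi 0),
        ((v (s₂ + h, i) - K * (s₂+h)^2) - (v (s₂, i) - K * s₂^2)) / h ≤
        ((v (s₁ + h, i) - K * (s₁+h)^2) - (v (s₁, i) - K * s₁^2)) / h := by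
      have hmem' : Ioo (0:ℝ) (1 - i - s₂) ∈ nhdsWithin (0:ℝ) (Ioi 0) :=
        Ioo_mem_nhdsGT_of_mem ⟨le_refl 0, by linarith⟩
      filter_upwards [hmem'] with h hh
      obtain ⟨hh0, hh1⟩ := hh
      have hc := hsc i
      have hSa : s₁ ∈ {s : ℝ | (s, i) ∈ {x : ℝ × ℝ | x.1 ∈ Ioo (0:ℝ) 1 ∧ x.2 ∈ Ioo (0:ℝ) 1 ∧ x.1 + x.2 < 1}} := by
        simp only [Set.mem_setOf_eq, Set.mem_Ioo]
        exact ⟨⟨hs₁0, hs₁1⟩, ⟨hi0, hi1⟩, hsum₁⟩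
      have hSd : s₂ + h ∈ {s : ℝ | (s, i) ∈ {x : ℝ × ℝ | x.1 ∈ Ioo (0:ℝ) 1 ∧ x.2 ∈ Ioo (0:ℝ) 1 ∧ x.1 + x.2 < 1}} := by
        simp only [Set.mem_setOf_eq, Set.mem_Ioo]
        exact ⟨⟨by linarith, by linarith⟩, ⟨hi0, hi1⟩, by linarith⟩
      have hT : (0:ℝ) < s₂ + h - s₁ := by linarith
      have hlam0 : (0:ℝ) ≤ (s₂ - s₁) / (s₂ + h - s₁) := div_nonneg (by linarith) hT.le
      have hmu0 : (0:ℝ) ≤ h / (s₂ + h - s₁) := div_nonneg hh0.le hT.le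
      have hsum1 : (s₂ - s₁) / (s₂ + h - s₁) + h / (s₂ + h - s₁) = 1 := by
        rw [← add_div, div_eq_one_iff_eq (ne_of_gt hT)]
        ring
      have hsum2 : h / (s₂ + h - s₁) + (s₂ - s₁) / (s₂ + h - s₁) = 1 := by
        rw [add_comm]; exact hsum1
      have hb1 := hc.2 hSa hSd hlam0 hmu0 hsum1
      have hb2 := hc.2 hSa hSd hmu0 hlam0 hsum2
      simp only [smul_eq_mul] at hb1 hb2
      have he1 : (s₂ - s₁) / (s₂ + h - s₁) * s₁ + h / (s₂ + h - s₁) * (s₂ + h) = s₁ + h := by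
        field_simp
        ring
      have he2 : h / (s₂ + h - s₁) * s₁ + (s₂ - s₁) / (s₂ + h - s₁) * (s₂ + h) = s₂ := by
        field_simp
        ring
      rw [he1] at hb1
      rw [he2] at hb2
      have hcomb : (s₂ - s₁) / (s₂ + h - s₁) * (v (s₁, i) - K * s₁ ^ 2)
          + h / (s₂ + h - s₁) * (v (s₂ + h, i) - K * (s₂ + h) ^ 2)
          + (h / (s₂ + h - s₁) * (v (s₁, i) - K * s₁ ^ 2)
          + (s₂ - s₁) / (s₂ + h - s₁) * (v (s₂ + h, i) - K * (s₂ + h) ^ 2))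
          = (v (s₁, i) - K * s₁ ^ 2) + (v (s₂ + h, i) - K * (s₂ + h) ^ 2) := by
        linear_combination ((v (s₁, i) - K * s₁ ^ 2) + (v (s₂ + h, i) - K * (s₂ + h) ^ 2)) * hsum1
      have key : (v (s₂ + h, i) - K * (s₂+h)^2) + (v (s₁, i) - K * s₁^2) ≤
          (v (s₁ + h, i) - K * (s₁+h)^2) + (v (s₂, i) - K * s₂^2) := by
        linarith [add_le_add hb1 hb2]
      exact (div_le_div_iff_of_pos_right hh0).mpr (by linarith)
    have := le_of_tendsto_of_tendsto L₂ L₁ hev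
    linarith
  refine ⟨2*K/b, by positivity, ?_⟩
  intro i s₁ s₂ h₁ h₂ h12
  have hW := hmono i s₁ s₂ h₁ h₂ h12
  simp only [Set.mem_setOf_eq, Set.mem_Ioo] at h₁ h₂
  obtain ⟨⟨hs₁0, hs₁1⟩, ⟨hi0, hi1⟩, hsum₁⟩ := h₁
  obtain ⟨⟨hs₂0, hs₂1⟩, -, hsum₂⟩ := h₂
  have hbs₁ : (0:ℝ) < b * s₁ := by positivity
  have hbs₂ : (0:ℝ) < b * s₂ := by positivity
  show s₁ * (min (max (w (s₂, i) / (b * s₂)) 0) Ubar - min (max (w (s₁, i) / (b * s₁)) 0) Ubar)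
      ≤ 2*K/b * (s₂ - s₁)
  set W₁ := w (s₁, i) with hW₁
  set W₂ := w (s₂, i) with hW₂
  set A := W₁ / (b * s₁) with hA
  set B := W₂ / (b * s₂) with hB
  have hAe : A * (b * s₁) = W₁ := div_mul_cancel₀ _ (ne_of_gt hbs₁)
  have hBe : B * (b * s₂) = W₂ := div_mul_cancel₀ _ (ne_of_gt hbs₂)
  clear hA hB
  rw [div_mul_eq_mul_div, le_div_iff₀ hb]
  have hU₁0 : (0:ℝ) ≤ min (max A 0) Ubar := le_min (le_max_right _ _) hU.le
  rcases le_or_gt (min (max B 0) Ubar) (min (max A 0) Ubar) with hle | hlt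
  · nlinarith [mul_nonneg hs₁0.le hb.le, mul_nonneg hK (sub_nonneg.2 h12),
      sub_nonpos.2 hle]
  · have hU₂pos : (0:ℝ) < min (max B 0) Ubar := lt_of_le_of_lt hU₁0 hlt
    have hBpos : 0 < B := by
      by_contra hc
      push_neg at hc
      rw [max_eq_right hc, min_eq_left hU.le] at hU₂pos
      exact lt_irrefl _ hU₂pos
    have hU₂le : min (max B 0) Ubar ≤ B :=
      le_trans (min_le_left _ _) (le_of_eq (max_eq_left hBpos.le))
    have hU₁lt : min (max A 0) Ubar < Ubar := lt_of_lt_of_le hlt (min_le_right _ _)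
    have hmaxA : max A 0 < Ubar := by
      by_contra hc
      push_neg at hc
      rw [min_eq_right hc] at hU₁lt
      exact lt_irrefl _ hU₁lt
    have hU₁ge : A ≤ min (max A 0) Ubar := by
      rw [min_eq_left hmaxA.le]
      exact le_max_left _ _
    rcases le_or_gt 0 W₁ with hW₁0 | hW₁0
    · have hA0 : 0 ≤ A := div_nonneg hW₁0 hbs₁.le
      have hdiff : min (max B 0) Ubar - min (max A 0) Ubar ≤ B - A := by linarith
      have hstep : s₁ * (min (max B 0) Ubar - min (max A 0) Ubar) * b ≤ s₁ * (B - A) * b :=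
        mul_le_mul_of_nonneg_right (mul_le_mul_of_nonneg_left hdiff hs₁0.le) hb.le
      refine le_trans hstep ?_
      have e1 : s₁ * B * b * s₂ = s₁ * W₂ := by rw [← hBe]; ring
      have e2 : s₁ * A * b * s₁ = s₁ * W₁ := by rw [← hAe]; ring
      have f3 : s₁ * A * b * s₁ ≤ s₁ * A * b * s₂ :=
        mul_le_mul_of_nonneg_left h12 (by positivity)
      have f4 : s₁ * W₂ ≤ s₁ * (W₁ + 2*K*(s₂ - s₁)) :=
        mul_le_mul_of_nonneg_left hW hs₁0.le
      have f5 : s₁ * (2*K*(s₂ - s₁)) ≤ s₂ * (2*K*(s₂ - s₁)) :=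
        mul_le_mul_of_nonneg_right h12
          (mul_nonneg (by positivity) (sub_nonneg.2 h12))
      have P : s₁ * (B - A) * b * s₂ ≤ 2*K*(s₂ - s₁) * s₂ := by
        linarith [e1, e2, f3, f4, f5]
      exact le_of_mul_le_mul_right P hs₂0
    · have hAneg : A < 0 := div_neg_of_neg_of_pos hW₁0 hbs₁
      have hU₁z : min (max A 0) Ubar = 0 := by
        rw [max_eq_right hAneg.le, min_eq_left hU.le]
      rw [hU₁z, sub_zero]
      have hW₂le : W₂ ≤ 2*K*(s₂ - s₁) := by linarith
      have g1 : min (max B 0) Ubar * (b * s₂) ≤ B * (b * s₂) :=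
        mul_le_mul_of_nonneg_right hU₂le (mul_pos hb hs₂0).le
      have g2 : s₁ * (min (max B 0) Ubar * b) ≤ s₂ * (min (max B 0) Ubar * b) :=
        mul_le_mul_of_nonneg_right h12 (mul_nonneg hU₂pos.le hb.le)
      linarith [g1, g2, hBe, hW₂le]
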